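/- In a ring R with a central element c and a sequence S : ℕ → R satisfying S 0 = 1, S 1 = s, and S (n+1) = S n * s - c * S (n-1) for n ≥ 1 (with s commuting with c), one has for all n ≥ m ≥ 1 the product formula S m * S n = ∑_{k=0}^{m} c^k * S (n + m - 2k), i.e. S m * S n = S (n+m) + c * S (n+m-2) + ⋯ + c^{m-1} * S (n-m+2) + c^m * S (n-m). -/
import Mathlib


/-- Proposition 3.3: product formula for the modified Chebyshev polynomials of the
second kind: for n ≥ m ≥ 1, S m * S n = ∑_{k=0}^{m} c^k * S (n + m - 2k). -/
theorem chebyshev_second_kind_product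
    (R : Type*) [Ring R] (c s : R)
    (hc : ∀ r : R, c * r = r * c)
    (hsc : s * c = c * s)
    (S : ℕ → R) (hS0 : S 0 = 1) (hS1 : S 1 = s)
    (hrec : ∀ n : ℕ, 1 ≤ n → S (n + 1) = S n * s - c * S (n - 1)) :
    ∀ m n : ℕ, 1 ≤ m → m ≤ n →
      S m * S n = ∑ k ∈ Finset.range (m + 1), c ^ k * S (n + m - 2 * k) := by
  -- s commutes with every S k
  have hcomm : ∀ k, S k * s = s * S k := by
    intro k
    induction k using Nat.strong_induction_on with
    | _ k ih =>
      match k, ih with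
      | 0, _ => simp [hS0]
      | 1, _ => simp [hS1]
      | (k+2), ih =>
        have h := hrec (k+1) (by omega)
        simp only [Nat.add_sub_cancel] at h
        rw [h, sub_mul, mul_assoc, ih (k+1) (by omega), mul_assoc, ih k (by omega),
          ← mul_assoc, ← mul_assoc, ← hsc, mul_sub, ← mul_assoc, ← mul_assoc,
          ih (k+1) (by omega)]
        rw [mul_assoc s, ih (k+1) (by omega), ← mul_assoc]
  have hstep : ∀ n, 1 ≤ n → s * S n = S (n+1) + c * S (n-1) := by
    intro n hn
    rw [hrec n hn, ← hcomm, sub_add_cancel]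
  -- the main claim, allowing m = 0
  have aux : ∀ m n : ℕ, m ≤ n →
      S m * S n = ∑ k ∈ Finset.range (m + 1), c ^ k * S (n + m - 2 * k) := by
    intro m
    induction m using Nat.strong_induction_on with
    | _ m ih =>
      match m, ih with
      | 0, _ =>
        intro n _
        simp [hS0]
      | 1, _ =>
        intro n hn
        rw [hS1, hstep n hn]
        rw [Finset.sum_range_succ, Finset.sum_range_succ, Finset.sum_range_zero]
        have e1 : n + 1 - 2 * 0 = n + 1 := by omega
        have e2 : n + 1 - 2 * 1 = n - 1 := by omega
        rw [e1, e2]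
        simp
      | (m+2), ih =>
        intro n hn
        have h := hrec (m+1) (by omega)
        simp only [Nat.add_sub_cancel] at h
        have key : S (m+1+1) * S n
            = S (m+1) * S (n+1) + c * (S (m+1) * S (n-1)) - c * (S m * S n) := by
          rw [h, sub_mul, mul_assoc, hstep n (by omega), mul_add,
            ← mul_assoc (S (m+1)) c, ← hc (S (m+1)), mul_assoc c, mul_assoc c]
        have hA := ih (m+1) (by omega) (n+1) (by omega)
        have hB := ih (m+1) (by omega) (n-1) (by omega)
        have hC := ih m (by omega) n (by omega)
        have eA : ∀ k, n + 1 + (m + 1) - 2 * k = n + (m+2) - 2 * k := by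
          intro k; omega
        have eB : ∀ k, n - 1 + (m + 1) - 2 * k = n + m - 2 * k := by
          intro k; omega
        simp only [eA] at hA
        simp only [eB] at hB
        rw [key, hA, hB, hC, Finset.mul_sum, Finset.mul_sum]
        have hterm : ∀ k x, c * (c ^ k * x) = c ^ (k+1) * x := by
          intro k x; rw [pow_succ', mul_assoc]
        simp only [hterm]
        rw [show m + 2 + 1 = (m + 2) + 1 from rfl, Finset.sum_range_succ (n := m + 2),
          show m + 1 + 1 = (m + 1) + 1 from rfl,
          Finset.sum_range_succ (f := fun k => c ^ (k+1) * S (n + m - 2*k)) (n := m + 1)]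
        have e3 : n + (m + 2) - 2 * (m + 2) = n + m - 2 * (m + 1) := by omega
        rw [e3]
        abel
  intro m n _ hmn
  exact aux m n hmn
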